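/- Let A = (M, 𝓕) be a complete deterministic Muller acceptor over a finite alphabet Σ with n states, and let q₁ and q₂ be states of A. If there exists an ω-word that is accepted from exactly one of q₁ and q₂ (i.e., belongs to exactly one of ⟦A^{q₁}⟧ and ⟦A^{q₂}⟧), then there exist u ∈ Σ* and v ∈ Σ⁺ with |u| + |v| ≤ n² + n⁴ such that the ultimately periodic ω-word u(v)^ω is accepted from exactly one of q₁ and q₂. -/

import Mathlib

open Filter

/-- Extended transition function: `dstar δ q x` is the state reached from `q` reading `x`. -/
def dstar {Q A : Type*} (δ : Q → A → Q) (q : Q) (x : List A) : Q := x.foldl δ q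

/-- The run of a deterministic automaton on an ω-word from state `q`. -/
def run {Q A : Type*} (δ : Q → A → Q) (q : Q) (w : ℕ → A) : ℕ → Q
  | 0 => q
  | n + 1 => δ (run δ q w n) (w n)

/-- The set of states visited infinitely often by the run on `w` from `q`. -/
def infOcc {Q A : Type*} (δ : Q → A → Q) (q : Q) (w : ℕ → A) : Set Q :=
  {p | ∃ᶠ n in atTop, run δ q w n = p}

/-- `C` is a strongly connected component of the automaton with transitions `δ`. -/
def IsSCC {Q A : Type*} (δ : Q → A → Q) (C : Set Q) : Prop :=
  C.Nonempty ∧ ∀ q₁ ∈ C, ∀ q₂ ∈ C, ∃ x : List A, x ≠ [] ∧ dstar δ q₁ x = q₂ ∧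
    ∀ x', x' <+: x → dstar δ q₁ x' ∈ C

/-- `q` is reachable from the initial state `qι`. -/
def Reachable {Q A : Type*} (δ : Q → A → Q) (qι q : Q) : Prop :=
  ∃ x : List A, dstar δ qι x = q

/-- The ultimately periodic ω-word `u(v)^ω`. -/
def upWord {A : Type*} (u v : List A) (hv : v ≠ []) : ℕ → A := fun n =>
  if h : n < u.length then u[n]
  else v[(n - u.length) % v.length]'(Nat.mod_lt _ (List.length_pos_iff.mpr hv))

/-- The transition function of the product automaton. -/
def prodStep {Q₁ Q₂ A : Type*} (δ₁ : Q₁ → A → Q₁) (δ₂ : Q₂ → A → Q₂) :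
    Q₁ × Q₂ → A → Q₁ × Q₂ := fun p a => (δ₁ p.1 a, δ₂ p.2 a)

/-- The ω-word `x·z` obtained by prepending the finite word `x` to `z`. -/
def prepend {A : Type*} (x : List A) (z : ℕ → A) : ℕ → A := fun n =>
  if h : n < x.length then x[n] else z (n - x.length)

/-- Acceptance of a deterministic Muller acceptor from state `q`. -/
def mullerAccept {Q A : Type*} (δ : Q → A → Q) (𝓕 : Set (Set Q)) (q : Q) (w : ℕ → A) : Prop :=
  infOcc δ q w ∈ 𝓕

section Aux

variable {A Q : Type*}

lemma dstar_append (δ : Q → A → Q) (q : Q) (x y : List A) :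
    dstar δ q (x ++ y) = dstar δ (dstar δ q x) y := List.foldl_append

lemma dstar_nil (δ : Q → A → Q) (q : Q) : dstar δ q [] = q := rfl

lemma run_add (δ : Q → A → Q) (q : Q) (w : ℕ → A) (N k : ℕ) :
    run δ q w (N + k) = dstar δ (run δ q w N) (List.ofFn fun i : Fin k => w (N + i)) := by
  induction k with
  | zero => simp [dstar]
  | succ k ih =>
    have : N + (k + 1) = (N + k) + 1 := by omega
    rw [this]
    show δ (run δ q w (N + k)) (w (N + k)) = _
    rw [ih, List.ofFn_succ', List.concat_eq_append, dstar_append]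
    simp [dstar, Fin.last, Fin.castSucc]

lemma run_eq_dstar (δ : Q → A → Q) (q : Q) (w : ℕ → A) (N : ℕ) :
    run δ q w N = dstar δ q (List.ofFn fun i : Fin N => w i) := by
  simpa [run] using run_add δ q w 0 N

lemma take_ofFn' {n : ℕ} (f : Fin n → A) (k : ℕ) (hk : k ≤ n) :
    (List.ofFn f).take k = List.ofFn (fun i : Fin k => f ⟨i, lt_of_lt_of_le i.2 hk⟩) := by
  apply List.ext_getElem
  · simp [Nat.min_eq_left hk]
  · intro i h1 h2
    simp [List.getElem_take, List.getElem_ofFn]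

lemma freq_exists [Finite Q] (f : ℕ → Q) {P : ℕ → Prop} (h : ∃ᶠ n in atTop, P n) :
    ∃ c, ∃ᶠ n in atTop, P n ∧ f n = c := by
  by_contra hc
  simp only [not_exists, not_frequently] at hc
  have hev : ∀ᶠ n in atTop, ∀ c, ¬(P n ∧ f n = c) := eventually_all.2 fun c => hc c
  obtain ⟨n, hn1, hn2⟩ := (h.and_eventually hev).exists
  exact hn2 (f n) ⟨hn1, rfl⟩

lemma infOcc_nonempty [Finite Q] (δ : Q → A → Q) (q : Q) (w : ℕ → A) :
    (infOcc δ q w).Nonempty := by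
  have htriv : ∃ᶠ n in atTop, True := frequently_atTop.2 fun a : ℕ => ⟨a, le_refl a, trivial⟩
  obtain ⟨c, hc⟩ := freq_exists (run δ q w) htriv
  exact ⟨c, hc.mono fun n h => h.2⟩

lemma eventually_mem_infOcc [Finite Q] (δ : Q → A → Q) (q : Q) (w : ℕ → A) :
    ∀ᶠ n in atTop, run δ q w n ∈ infOcc δ q w := by
  have h : ∀ p : Q, ∀ᶠ n in atTop, p ∉ infOcc δ q w → run δ q w n ≠ p := by
    intro p
    by_cases hp : p ∈ infOcc δ q w
    · exact Eventually.of_forall fun n h => absurd hp h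
    · have := not_frequently.1 hp
      exact this.mono fun n hn _ => hn
  exact (eventually_all.2 h).mono fun n hn => by
    by_contra hmem
    exact hn (run δ q w n) hmem rfl

lemma conn_infOcc [Finite Q] (δ : Q → A → Q) (q : Q) (w : ℕ → A) {s t : Q}
    (hs : s ∈ infOcc δ q w) (ht : t ∈ infOcc δ q w) :
    ∃ x : List A, x ≠ [] ∧ dstar δ s x = t ∧ ∀ k, dstar δ s (x.take k) ∈ infOcc δ q w := by
  obtain ⟨N₀, hN₀⟩ := eventually_atTop.1 (eventually_mem_infOcc δ q w)
  obtain ⟨N, hNge, hNs⟩ := frequently_atTop.1 hs N₀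
  obtain ⟨M, hMge, hMt⟩ := frequently_atTop.1 ht (N + 1)
  refine ⟨List.ofFn fun i : Fin (M - N) => w (N + i), ?_, ?_, ?_⟩
  · have : (List.ofFn fun i : Fin (M - N) => w (N + i)).length = M - N := by simp
    intro hnil
    rw [hnil] at this
    simp at this
    omega
  · have := run_add δ q w N (M - N)
    rw [hNs] at this
    rw [← this]
    have : N + (M - N) = M := by omega
    rw [this, hMt]
  · intro k
    rcases le_or_gt (M - N) k with hk | hk
    · rw [List.take_of_length_le (by simpa using hk)]
      have := run_add δ q w N (M - N)
      rw [hNs] at this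
      rw [← this]
      have h2 : N + (M - N) = M := by omega
      rw [h2, hMt]
      exact ht
    · rw [take_ofFn' _ k (le_of_lt hk)]
      have := run_add δ q w N k
      rw [hNs] at this
      rw [← this]
      exact hN₀ (N + k) (by omega)

lemma cut_lemma (δ : Q → A → Q) (S : Set Q) (x : List A) (a : Q)
    (hS : ∀ k, dstar δ a (x.take k) ∈ S) (i j : ℕ) (hij : i < j) (hj : j ≤ x.length)
    (heq : dstar δ a (x.take i) = dstar δ a (x.take j)) :
    dstar δ a (x.take i ++ x.drop j) = dstar δ a x ∧
    (x.take i ++ x.drop j).length = x.length - (j - i) ∧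
    ∀ k, dstar δ a ((x.take i ++ x.drop j).take k) ∈ S := by
  have hi : i ≤ x.length := by omega
  have hlen_take : (x.take i).length = i := by simp [Nat.min_eq_left hi]
  refine ⟨?_, ?_, ?_⟩
  · rw [dstar_append, heq, ← dstar_append, List.take_append_drop]
  · simp; omega
  · intro k
    rcases le_or_gt k i with hk | hk
    · rw [List.take_append_of_le_length (by omega), List.take_take, Nat.min_eq_left hk]
      exact hS k
    · have hk' : k = i + (k - i) := by omega
      have happ := List.take_length_add_append (l₁ := x.take i) (l₂ := x.drop j) (k - i)
      rw [hlen_take] at happ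
      rw [hk', happ, dstar_append, heq, ← dstar_append, ← List.take_add]
      exact hS (j + (k - i))

lemma shorten [Fintype Q] (δ : Q → A → Q) (S : Set Q) :
    ∀ n : ℕ, ∀ x : List A, x.length ≤ n → ∀ a : Q, x ≠ [] →
      (∀ k, dstar δ a (x.take k) ∈ S) →
      ∃ y : List A, y ≠ [] ∧ y.length ≤ Fintype.card Q ∧ dstar δ a y = dstar δ a x ∧
        ∀ k, dstar δ a (y.take k) ∈ S := by
  intro n
  induction n with
  | zero =>
    intro x hx a hne _
    exact absurd (List.length_eq_zero_iff.mp (by omega)) hne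
  | succ n ih =>
    intro x hx a hne hS
    by_cases hlen : x.length ≤ Fintype.card Q
    · exact ⟨x, hne, hlen, rfl, hS⟩
    · push_neg at hlen
      obtain ⟨i, j, hij, hfij⟩ := Fintype.exists_ne_map_eq_of_card_lt
        (fun i : Fin x.length => dstar δ a (x.take (i + 1))) (by simpa using hlen)
      have key : ∀ i j : Fin x.length, i < j →
          dstar δ a (x.take (i + 1)) = dstar δ a (x.take (j + 1)) →
          ∃ y : List A, y ≠ [] ∧ y.length ≤ Fintype.card Q ∧ dstar δ a y = dstar δ a x ∧
            ∀ k, dstar δ a (y.take k) ∈ S := by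
        intro i j hlt heq
        obtain ⟨h1, h2, h3⟩ := cut_lemma δ S x a hS (i + 1) (j + 1)
          (by omega) (by omega) heq
        set y := x.take (i + 1) ++ x.drop (j + 1) with hy
        have hyne : y ≠ [] := by
          intro hnil
          rw [hnil] at h2
          simp at h2
          omega
        obtain ⟨z, hz1, hz2, hz3, hz4⟩ := ih y (by omega) a hyne h3
        exact ⟨z, hz1, hz2, hz3.trans h1, hz4⟩
      rcases lt_or_gt_of_ne hij with hlt | hlt
      · exact key i j hlt hfij
      · exact key j i hlt hfij.symm

lemma cycle_lemma (δ : Q → A → Q) (S : Set Q) (c : ℕ)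
    (conn : ∀ s ∈ S, ∀ t ∈ S, ∃ x : List A, x ≠ [] ∧ x.length ≤ c ∧ dstar δ s x = t ∧
      ∀ k, dstar δ s (x.take k) ∈ S) :
    ∀ (L : List Q), (∀ s ∈ L, s ∈ S) → ∀ a, a ∈ S → ∀ b, b ∈ S →
      ∃ v : List A, v ≠ [] ∧ v.length ≤ (L.length + 1) * c ∧ dstar δ a v = b ∧
        (∀ k, dstar δ a (v.take k) ∈ S) ∧
        ∀ s ∈ L, ∃ r < v.length, dstar δ a (v.take r) = s := by
  intro L
  induction L with
  | nil =>
    intro _ a ha b hb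
    obtain ⟨x, h1, h2, h3, h4⟩ := conn a ha b hb
    exact ⟨x, h1, by simpa using h2, h3, h4, by simp⟩
  | cons s L ih =>
    intro hL a ha b hb
    have hsS : s ∈ S := hL s (List.mem_cons_self)
    obtain ⟨x, hxne, hxlen, hxend, hxS⟩ := conn a ha s hsS
    obtain ⟨v, hvne, hvlen, hvend, hvS, hvvis⟩ :=
      ih (fun t ht => hL t (List.mem_cons_of_mem s ht)) s hsS b hb
    have hxv : x.length + v.length ≤ (L.length + 1 + 1) * c := by
      have : (L.length + 1 + 1) * c = c + (L.length + 1) * c := by ring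
      omega
    refine ⟨x ++ v, by simp [hxne], by simpa using hxv, ?_, ?_, ?_⟩
    · rw [dstar_append, hxend, hvend]
    · intro k
      rcases le_or_gt k x.length with hk | hk
      · rw [List.take_append_of_le_length hk]
        exact hxS k
      · have hk' : k = x.length + (k - x.length) := by omega
        rw [hk', List.take_length_add_append, dstar_append, hxend]
        exact hvS (k - x.length)
    · intro t ht
      rcases List.mem_cons.1 ht with rfl | htL
      · refine ⟨x.length, ?_, ?_⟩
        · have : 0 < v.length := List.length_pos_iff.2 hvne
          simp only [List.length_append]
          omega
        · have : x.length = x.length + 0 := by omega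
          rw [this, List.take_length_add_append]
          simp [hxend]
      · obtain ⟨r, hr, hrt⟩ := hvvis t htL
        refine ⟨x.length + r, by simp; omega, ?_⟩
        rw [List.take_length_add_append, dstar_append, hxend, hrt]

lemma run_prod {Q₁ Q₂ : Type*} (δ₁ : Q₁ → A → Q₁) (δ₂ : Q₂ → A → Q₂) (p : Q₁) (q : Q₂)
    (w : ℕ → A) (n : ℕ) :
    run (prodStep δ₁ δ₂) (p, q) w n = (run δ₁ p w n, run δ₂ q w n) := by
  induction n with
  | zero => rfl
  | succ n ih => show prodStep δ₁ δ₂ _ _ = _; rw [ih]; rfl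

lemma infOcc_fst {Q₁ Q₂ : Type*} [Finite Q₂] (δ₁ : Q₁ → A → Q₁) (δ₂ : Q₂ → A → Q₂)
    (p : Q₁) (q : Q₂) (w : ℕ → A) :
    infOcc δ₁ p w = Prod.fst '' infOcc (prodStep δ₁ δ₂) (p, q) w := by
  ext a
  constructor
  · intro ha
    obtain ⟨c, hc⟩ := freq_exists (run δ₂ q w) ha
    refine ⟨(a, c), ?_, rfl⟩
    refine hc.mono fun n hn => ?_
    rw [run_prod, hn.1, hn.2]
  · rintro ⟨⟨a', c⟩, hac, rfl⟩
    refine hac.mono fun n hn => ?_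
    rw [run_prod] at hn
    exact congrArg Prod.fst hn

lemma infOcc_snd {Q₁ Q₂ : Type*} [Finite Q₁] (δ₁ : Q₁ → A → Q₁) (δ₂ : Q₂ → A → Q₂)
    (p : Q₁) (q : Q₂) (w : ℕ → A) :
    infOcc δ₂ q w = Prod.snd '' infOcc (prodStep δ₁ δ₂) (p, q) w := by
  ext a
  constructor
  · intro ha
    obtain ⟨c, hc⟩ := freq_exists (run δ₁ p w) ha
    refine ⟨(c, a), ?_, rfl⟩
    refine hc.mono fun n hn => ?_
    rw [run_prod, hn.1, hn.2]
  · rintro ⟨⟨c, a'⟩, hac, rfl⟩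
    refine hac.mono fun n hn => ?_
    rw [run_prod] at hn
    exact congrArg Prod.snd hn

lemma upWord_ge {u v : List A} (hv : v ≠ []) (k : ℕ) :
    upWord u v hv (u.length + k) = v[k % v.length]'(Nat.mod_lt _ (List.length_pos_iff.mpr hv)) := by
  simp [upWord]

lemma run_upWord_base (δ : Q → A → Q) (q : Q) (u v : List A) (hv : v ≠ []) :
    run δ q (upWord u v hv) u.length = dstar δ q u := by
  rw [run_eq_dstar]
  congr 1
  have : (fun i : Fin u.length => upWord u v hv i) = fun i : Fin u.length => u[(i : ℕ)] := by
    funext i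
    simp [upWord, i.2]
  rw [this]
  exact List.ofFn_getElem

lemma run_upWord_period (δ : Q → A → Q) (q p : Q) (u v : List A) (hv : v ≠ [])
    (hu : dstar δ q u = p) (hcyc : dstar δ p v = p) (m : ℕ) :
    run δ q (upWord u v hv) (u.length + m * v.length) = p := by
  induction m with
  | zero => simpa using (run_upWord_base δ q u v hv).trans hu
  | succ m ih =>
    have harith : u.length + (m + 1) * v.length = (u.length + m * v.length) + v.length := by ring
    rw [harith, run_add, ih]
    have hofn : (List.ofFn fun i : Fin v.length => upWord u v hv (u.length + m * v.length + i)) = v := by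
      have : (fun i : Fin v.length => upWord u v hv (u.length + m * v.length + i)) =
          fun i : Fin v.length => v[i] := by
        funext i
        rw [Nat.add_assoc, upWord_ge hv (m * v.length + i)]
        congr 1
        rw [Nat.mul_comm, Nat.mul_add_mod]
        exact Nat.mod_eq_of_lt i.2
      rw [this]
      exact List.ofFn_getElem
    rw [hofn, hcyc]

lemma run_upWord_gen (δ : Q → A → Q) (q p : Q) (u v : List A) (hv : v ≠ [])
    (hu : dstar δ q u = p) (hcyc : dstar δ p v = p) (m r : ℕ) (hr : r ≤ v.length) :
    run δ q (upWord u v hv) (u.length + m * v.length + r) = dstar δ p (v.take r) := by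
  rw [run_add, run_upWord_period δ q p u v hv hu hcyc m]
  congr 1
  apply List.ext_getElem
  · simp [Nat.min_eq_left hr]
  · intro i h1 h2
    simp only [List.getElem_ofFn, List.getElem_take]
    have hi : i < v.length := by simp at h2; omega
    rw [Nat.add_assoc, upWord_ge hv (m * v.length + i)]
    congr 1
    rw [Nat.mul_comm, Nat.mul_add_mod]
    exact Nat.mod_eq_of_lt hi

lemma infOcc_upWord (δ : Q → A → Q) (q p : Q) (u v : List A) (hv : v ≠ [])
    (hu : dstar δ q u = p) (hcyc : dstar δ p v = p) :
    infOcc δ q (upWord u v hv) = {s | ∃ r < v.length, dstar δ p (v.take r) = s} := by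
  have hvpos : 0 < v.length := List.length_pos_iff.2 hv
  ext s
  constructor
  · intro hs
    have hev : ∀ᶠ n in atTop, run δ q (upWord u v hv) n ∈
        {s | ∃ r < v.length, dstar δ p (v.take r) = s} := by
      refine eventually_atTop.2 ⟨u.length, fun n hn => ?_⟩
      have hn' : n = u.length + ((n - u.length) / v.length) * v.length +
          (n - u.length) % v.length := by
        have := Nat.div_add_mod (n - u.length) v.length
        rw [Nat.mul_comm] at this
        omega
      refine ⟨(n - u.length) % v.length, Nat.mod_lt _ hvpos, ?_⟩
      rw [← run_upWord_gen δ q p u v hv hu hcyc _ _ (le_of_lt (Nat.mod_lt _ hvpos)), ← hn']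
    obtain ⟨n, hn1, hn2⟩ := (hs.and_eventually hev).exists
    rw [← hn1]
    exact hn2
  · rintro ⟨r, hr, rfl⟩
    refine frequently_atTop.2 fun N => ⟨u.length + N * v.length + r, ?_, ?_⟩
    · have : N ≤ N * v.length := Nat.le_mul_of_pos_right N hvpos
      omega
    · exact run_upWord_gen δ q p u v hv hu hcyc N r (le_of_lt hr)

end Aux

/-- If two states of a DMA with `n` states are distinguishable, they are distinguishable by
an ultimately periodic word of length at most `n² + n⁴`. -/
theorem stmt8 {A Q : Type*} [Fintype A] [Fintype Q] (δ : Q → A → Q) (𝓕 : Set (Set Q))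
    (q₁ q₂ : Q)
    (h : ∃ w : ℕ → A, Xor' (mullerAccept δ 𝓕 q₁ w) (mullerAccept δ 𝓕 q₂ w)) :
    ∃ (u v : List A) (hv : v ≠ []),
      u.length + v.length ≤ Fintype.card Q ^ 2 + Fintype.card Q ^ 4 ∧
      Xor' (mullerAccept δ 𝓕 q₁ (upWord u v hv)) (mullerAccept δ 𝓕 q₂ (upWord u v hv)) := by
  classical
  obtain ⟨w, hw⟩ := h
  set δ₂ := prodStep δ δ with hδ₂
  set q0 : Q × Q := (q₁, q₂) with hq0
  set S := infOcc δ₂ q0 w with hSdef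
  set c2 := Fintype.card Q ^ 2 with hc2
  have cardprod : Fintype.card (Q × Q) = c2 := by simp [Fintype.card_prod, hc2, sq]
  -- connectivity within S with length bound
  have connS : ∀ s ∈ S, ∀ t ∈ S, ∃ x : List A, x ≠ [] ∧ x.length ≤ c2 ∧
      dstar δ₂ s x = t ∧ ∀ k, dstar δ₂ s (x.take k) ∈ S := by
    intro s hs t ht
    obtain ⟨x, hne, hend, hstay⟩ := conn_infOcc δ₂ q0 w hs ht
    obtain ⟨y, hy1, hy2, hy3, hy4⟩ := shorten δ₂ S x.length x le_rfl s hne hstay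
    exact ⟨y, hy1, by rwa [cardprod] at hy2, hy3.trans hend, hy4⟩
  -- enumerate S
  have hSfin : S.Finite := S.toFinite
  set L := hSfin.toFinset.toList with hL
  have hLmem : ∀ s, s ∈ L ↔ s ∈ S := by
    intro s
    rw [hL, Finset.mem_toList, Set.Finite.mem_toFinset]
  have hLlen : L.length ≤ c2 := by
    rw [hL, Finset.length_toList, ← cardprod]
    exact Finset.card_le_univ _
  obtain ⟨s₀, hs₀⟩ := infOcc_nonempty δ₂ q0 w
  have hLne : L ≠ [] := by
    intro hnil
    have := (hLmem s₀).2 hs₀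
    rw [hnil] at this
    simp at this
  set h0 := L.head hLne with hh0def
  have hh0 : h0 ∈ S := (hLmem h0).1 (List.head_mem hLne)
  have hLtail : L.tail.length + 1 = L.length := by
    have h1 := List.length_tail (l := L)
    have h2 : 0 < L.length := List.length_pos_iff.2 hLne
    omega
  -- the cycle v
  obtain ⟨v, hvne, hvlen, hvend, hvS, hvvis⟩ :=
    cycle_lemma δ₂ S c2 connS L.tail
      (fun t ht => (hLmem t).1 (List.mem_of_mem_tail ht)) h0 hh0 h0 hh0
  rw [hLtail] at hvlen
  have hvlen' : v.length ≤ Fintype.card Q ^ 4 := by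
    have h2 : L.length * c2 ≤ c2 * c2 := Nat.mul_le_mul_right _ hLlen
    have h3 : c2 * c2 = Fintype.card Q ^ 4 := by rw [hc2]; ring
    omega
  -- the prefix u
  have hreach : ∃ u : List A, u.length ≤ c2 ∧ dstar δ₂ q0 u = h0 := by
    obtain ⟨N, _, hN⟩ := frequently_atTop.1 hh0 0
    set x : List A := List.ofFn fun i : Fin N => w i with hx
    have hxend : dstar δ₂ q0 x = h0 := by rw [← run_eq_dstar, hN]
    rcases eq_or_ne x [] with hnil | hne
    · exact ⟨[], by simp, by rw [← hnil]; exact hxend⟩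
    · obtain ⟨y, _, hy2, hy3, _⟩ :=
        shorten δ₂ Set.univ x.length x le_rfl q0 hne (fun _ => Set.mem_univ _)
      exact ⟨y, by rwa [cardprod] at hy2, hy3.trans hxend⟩
  obtain ⟨u, hulen, huend⟩ := hreach
  -- infOcc of the ultimately periodic word in the product
  have key : infOcc δ₂ q0 (upWord u v hvne) = S := by
    rw [infOcc_upWord δ₂ q0 h0 u v hvne huend hvend]
    ext s
    constructor
    · rintro ⟨r, hr, rfl⟩
      exact hvS r
    · intro hsS
      have hsL : s ∈ L := (hLmem s).2 hsS
      have hcons : L = L.head hLne :: L.tail := (List.cons_head_tail hLne).symm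
      rw [hcons, List.mem_cons] at hsL
      rcases hsL with rfl | htail
      · exact ⟨0, List.length_pos_iff.2 hvne, by simp [dstar_nil, hh0def]⟩
      · obtain ⟨r, hr, hrt⟩ := hvvis s htail
        exact ⟨r, hr, hrt⟩
  -- projections
  have proj1 : infOcc δ q₁ (upWord u v hvne) = infOcc δ q₁ w := by
    rw [infOcc_fst δ δ q₁ q₂ (upWord u v hvne), infOcc_fst δ δ q₁ q₂ w]
    rw [← hδ₂, ← hq0, key, hSdef]
  have proj2 : infOcc δ q₂ (upWord u v hvne) = infOcc δ q₂ w := by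
    rw [infOcc_snd δ δ q₁ q₂ (upWord u v hvne), infOcc_snd δ δ q₁ q₂ w]
    rw [← hδ₂, ← hq0, key, hSdef]
  refine ⟨u, v, hvne, by omega, ?_⟩
  unfold mullerAccept at hw ⊢
  rw [proj1, proj2]
  exact hw
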